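/- Let G be a d-regular graph on n vertices whose adjacency matrix has all nontrivial eigenvalues of absolute value at most μ. Then for any two vertex subsets U, W, |e(U,W) − d|U||W|/n| ≤ μ √(|U||W|), where e(U,W) counts pairs (u,w) ∈ U×W that are adjacent. -/

import Mathlib

private lemma ind_sum {V : Type*} [Fintype V] [DecidableEq V] (U : Finset V) (X : V → ℝ) :
    ∑ v, (if v ∈ U then (1:ℝ) else 0) * X v = ∑ v ∈ U, X v := by
  simp [boole_mul, Finset.sum_ite_mem]

/-- Expander mixing lemma: if `G` is a `d`-regular graph on `n` vertices whose
adjacency matrix satisfies the spectral bound `μ` on the orthogonal complement of the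
constants (i.e. all nontrivial eigenvalues have absolute value at most `μ`, expressed via
the bilinear form on mean-zero vectors), then for any vertex sets `U`, `W`,
`|e(U,W) − d|U||W|/n| ≤ μ √(|U||W|)`. -/
theorem stmt_5 {V : Type*} [Fintype V] [DecidableEq V]
    (G : SimpleGraph V) [DecidableRel G.Adj] (d : ℕ)
    (hreg : G.IsRegularOfDegree d) (μ : ℝ) (hμ0 : 0 ≤ μ)
    (hμ : ∀ f g : V → ℝ, (∑ v, f v = 0) → (∑ v, g v = 0) →
      |∑ v, f v * ((G.adjMatrix ℝ).mulVec g) v| ≤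
        μ * Real.sqrt (∑ v, (f v) ^ 2) * Real.sqrt (∑ v, (g v) ^ 2))
    (U W : Finset V) :
    |((((U ×ˢ W).filter (fun p : V × V => G.Adj p.1 p.2)).card : ℝ) -
        (d : ℝ) * U.card * W.card / (Fintype.card V : ℝ))| ≤
      μ * Real.sqrt ((U.card : ℝ) * W.card) := by
  rcases Nat.eq_zero_or_pos (Fintype.card V) with hn0 | hnpos
  · have : IsEmpty V := Fintype.card_eq_zero_iff.mp hn0
    have hU : U = ∅ := Finset.eq_empty_of_isEmpty U
    have hW : W = ∅ := Finset.eq_empty_of_isEmpty W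
    simp [hU, hW]
  set n : ℝ := (Fintype.card V : ℝ) with hn
  have hnne : n ≠ 0 := by positivity
  set A : Matrix V V ℝ := G.adjMatrix ℝ with hA
  -- row and column sums
  have hrow : ∀ v, ∑ u, A v u = (d : ℝ) := by
    intro v
    have h2 : (Finset.univ.filter (fun u => G.Adj v u)).card = d := by
      rw [← SimpleGraph.neighborFinset_eq_filter]
      exact hreg v
    simp [hA, SimpleGraph.adjMatrix_apply, Finset.sum_boole, h2]
  have hcol : ∀ u, ∑ v, A v u = (d : ℝ) := by
    intro u
    have : ∑ v, A v u = ∑ v, A u v :=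
      Finset.sum_congr rfl fun v _ => by simp [hA, SimpleGraph.adjMatrix_apply, G.adj_comm]
    rw [this, hrow]
  set cU : ℝ := (U.card : ℝ) / n with hcU
  set cW : ℝ := (W.card : ℝ) / n with hcW
  set f : V → ℝ := fun v => (if v ∈ U then (1:ℝ) else 0) - cU with hf
  set g : V → ℝ := fun v => (if v ∈ W then (1:ℝ) else 0) - cW with hg
  have hindU : ∑ v, (if v ∈ U then (1:ℝ) else 0) = (U.card : ℝ) := by
    simp
  have hindW : ∑ v, (if v ∈ W then (1:ℝ) else 0) = (W.card : ℝ) := by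
    simp
  have hsf : ∑ v, f v = 0 := by
    simp only [hf, Finset.sum_sub_distrib, hindU, Finset.sum_const, Finset.card_univ,
      nsmul_eq_mul]
    rw [hcU, mul_div_cancel₀ _ hnne]
    ring
  have hsg : ∑ v, g v = 0 := by
    simp only [hg, Finset.sum_sub_distrib, hindW, Finset.sum_const, Finset.card_univ,
      nsmul_eq_mul]
    rw [hcW, mul_div_cancel₀ _ hnne]
    ring
  -- the main identity
  have hinner : ∀ v, (A.mulVec g) v = (∑ u ∈ W, A v u) - cW * d := by
    intro v
    have : A.mulVec g v = ∑ u, A v u * g u := rfl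
    rw [this]
    calc ∑ u, A v u * g u
        = ∑ u, ((if u ∈ W then (1:ℝ) else 0) * A v u - cW * A v u) :=
          Finset.sum_congr rfl fun u _ => by simp only [hg]; ring
      _ = (∑ u ∈ W, A v u) - cW * ∑ u, A v u := by
          rw [Finset.sum_sub_distrib, ind_sum, ← Finset.mul_sum]
      _ = (∑ u ∈ W, A v u) - cW * d := by rw [hrow]
  have he : (((U ×ˢ W).filter (fun p : V × V => G.Adj p.1 p.2)).card : ℝ)
      = ∑ v ∈ U, ∑ u ∈ W, A v u := by
    rw [Finset.card_filter]
    push_cast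
    rw [Finset.sum_product]
    exact Finset.sum_congr rfl fun v _ => Finset.sum_congr rfl fun u _ => by
      simp [hA, SimpleGraph.adjMatrix_apply]
  have hSb : ∑ v, ∑ u ∈ W, A v u = (d : ℝ) * W.card := by
    rw [show ∑ v, ∑ u ∈ W, A v u = ∑ u ∈ W, ∑ v, A v u from Finset.sum_comm]
    rw [Finset.sum_congr rfl fun u _ => hcol u]
    simp [mul_comm]
  have hS : ∑ v, f v * (A.mulVec g) v
      = (((U ×ˢ W).filter (fun p : V × V => G.Adj p.1 p.2)).card : ℝ)
        - (d : ℝ) * U.card * W.card / n := by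
    calc ∑ v, f v * (A.mulVec g) v
        = ∑ v, ((if v ∈ U then (1:ℝ) else 0) * (∑ u ∈ W, A v u)
            - cU * (∑ u ∈ W, A v u) - (cW * d) * f v) := by
          refine Finset.sum_congr rfl fun v _ => ?_
          rw [hinner v]
          simp only [hf]; ring
      _ = (∑ v ∈ U, ∑ u ∈ W, A v u) - cU * (∑ v, ∑ u ∈ W, A v u)
            - (cW * d) * ∑ v, f v := by
          rw [Finset.sum_sub_distrib, Finset.sum_sub_distrib, ind_sum, ← Finset.mul_sum,
            ← Finset.mul_sum]
      _ = _ := by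
          rw [hsf, hSb, ← he, hcU]
          ring
  -- square sums
  have hfsq : ∑ v, (f v) ^ 2 ≤ (U.card : ℝ) := by
    have : ∑ v, (f v) ^ 2 = (U.card : ℝ) * (1 - 2 * cU) + n * cU ^ 2 := by
      calc ∑ v, (f v) ^ 2
          = ∑ v, ((if v ∈ U then (1:ℝ) else 0) * (1 - 2 * cU) + cU ^ 2) := by
            refine Finset.sum_congr rfl fun v _ => ?_
            by_cases h : v ∈ U <;> simp [hf, h] <;> ring
        _ = (∑ v ∈ U, (1 - 2 * cU)) + n * cU ^ 2 := by
            rw [Finset.sum_add_distrib, ind_sum]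
            simp [hn, Finset.card_univ]
        _ = (U.card : ℝ) * (1 - 2 * cU) + n * cU ^ 2 := by
            rw [Finset.sum_const, nsmul_eq_mul]
    rw [this, hcU]
    have hU0 : (0:ℝ) ≤ (U.card : ℝ) := by positivity
    have h1 : ((U.card : ℝ))^2 / n ≥ 0 := by positivity
    have : (U.card : ℝ) * (1 - 2 * ((U.card : ℝ) / n)) + n * ((U.card : ℝ) / n) ^ 2
        = (U.card : ℝ) - ((U.card : ℝ))^2 / n := by
      field_simp
      ring
    rw [this]
    linarith
  have hgsq : ∑ v, (g v) ^ 2 ≤ (W.card : ℝ) := by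
    have : ∑ v, (g v) ^ 2 = (W.card : ℝ) * (1 - 2 * cW) + n * cW ^ 2 := by
      calc ∑ v, (g v) ^ 2
          = ∑ v, ((if v ∈ W then (1:ℝ) else 0) * (1 - 2 * cW) + cW ^ 2) := by
            refine Finset.sum_congr rfl fun v _ => ?_
            by_cases h : v ∈ W <;> simp [hg, h] <;> ring
        _ = (∑ v ∈ W, (1 - 2 * cW)) + n * cW ^ 2 := by
            rw [Finset.sum_add_distrib, ind_sum]
            simp [hn, Finset.card_univ]
        _ = (W.card : ℝ) * (1 - 2 * cW) + n * cW ^ 2 := by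
            rw [Finset.sum_const, nsmul_eq_mul]
    rw [this, hcW]
    have h1 : ((W.card : ℝ))^2 / n ≥ 0 := by positivity
    have : (W.card : ℝ) * (1 - 2 * ((W.card : ℝ) / n)) + n * ((W.card : ℝ) / n) ^ 2
        = (W.card : ℝ) - ((W.card : ℝ))^2 / n := by
      field_simp
      ring
    rw [this]
    linarith
  have hbound := hμ f g hsf hsg
  rw [hS] at hbound
  refine hbound.trans ?_
  have h1 : Real.sqrt (∑ v, (f v) ^ 2) ≤ Real.sqrt (U.card : ℝ) := Real.sqrt_le_sqrt hfsq
  have h2 : Real.sqrt (∑ v, (g v) ^ 2) ≤ Real.sqrt (W.card : ℝ) := Real.sqrt_le_sqrt hgsq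
  have : μ * Real.sqrt (∑ v, (f v) ^ 2) * Real.sqrt (∑ v, (g v) ^ 2)
      ≤ μ * Real.sqrt (U.card : ℝ) * Real.sqrt (W.card : ℝ) := by
    gcongr

  refine this.trans ?_
  rw [mul_assoc, ← Real.sqrt_mul (by positivity)]
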